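/- Let c₃, α̃, k₀ be positive constants and 0 < β < 1. Let φ : [k₀, ∞) → [0, ∞) be nonincreasing and satisfy φ(2k) ≤ c₃·φ(k)^β / k^α̃ for every k ≥ k₀. Then for every h > k ≥ k₀, φ(h) ≤ c₄·φ(k)^β / (h−k)^α̃, where c₄ = max{ 4^α̃·c₃, c₅^(1−β) } and c₅ = 2^(α̃/(1−β)²)·( c₃^(1/(1−β)) + (2k₀)^(α̃/(1−β))·φ(k₀) ). -/

import Mathlib

open Real

theorem doubling_to_stampacchia
    (c₃ α k₀ β : ℝ) (hc₃ : 0 < c₃) (hα : 0 < α) (hk₀ : 0 < k₀)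
    (hβ0 : 0 < β) (hβ1 : β < 1)
    (φ : ℝ → ℝ)
    (hnonneg : ∀ k, k₀ ≤ k → 0 ≤ φ k)
    (hmono : AntitoneOn φ (Set.Ici k₀))
    (hdouble : ∀ k, k₀ ≤ k → φ (2 * k) ≤ c₃ * φ k ^ β / k ^ α) :
    ∀ h k, k₀ ≤ k → k < h →
      φ h ≤ (max (4 ^ α * c₃)
          ((2 ^ (α / (1 - β) ^ 2) *
            (c₃ ^ (1 / (1 - β)) + (2 * k₀) ^ (α / (1 - β)) * φ k₀)) ^ (1 - β))) *
        φ k ^ β / (h - k) ^ α := by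
  have h1β : (0:ℝ) < 1 - β := by linarith
  set μ := α / (1 - β) with hμdef
  have hμ : 0 < μ := div_pos hα h1β
  have hμα : μ * β = μ - α := by
    rw [hμdef]; field_simp; ring
  have hμ1β : μ * (1 - β) = α := by
    rw [hμdef]; field_simp
  set Cv := (2:ℝ) ^ μ * c₃ with hCv
  have hCvpos : 0 < Cv := by
    have : (0:ℝ) < (2:ℝ) ^ μ := Real.rpow_pos_of_pos (by norm_num) μ
    positivity
  set X := Cv ^ (1 / (1 - β)) with hX
  set M := max X ((2 * k₀) ^ μ * φ k₀) with hM
  have hXpos : 0 < X := Real.rpow_pos_of_pos hCvpos _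
  have hMpos : 0 < M := lt_of_lt_of_le hXpos (le_max_left _ _)
  -- the one-step recursion for A(t) = t^μ φ(t)
  have step : ∀ t, 2 * k₀ ≤ t →
      t ^ μ * φ t ≤ Cv * ((t / 2) ^ μ * φ (t / 2)) ^ β := by
    intro t ht
    have hs : k₀ ≤ t / 2 := by linarith
    have hspos : (0:ℝ) < t / 2 := lt_of_lt_of_le hk₀ hs
    have htpos : (0:ℝ) < t := by linarith
    have hdt : φ t ≤ c₃ * φ (t / 2) ^ β / (t / 2) ^ α := by
      have := hdouble (t / 2) hs
      rwa [show 2 * (t / 2) = t by ring] at this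
    have e1 : ((t / 2) ^ μ) ^ β = (t / 2) ^ μ / (t / 2) ^ α := by
      rw [← Real.rpow_mul hspos.le, hμα, Real.rpow_sub hspos]
    calc t ^ μ * φ t ≤ t ^ μ * (c₃ * φ (t / 2) ^ β / (t / 2) ^ α) := by
          exact mul_le_mul_of_nonneg_left hdt (Real.rpow_nonneg htpos.le μ)
      _ = Cv * ((t / 2) ^ μ * φ (t / 2)) ^ β := by
          rw [Real.mul_rpow (Real.rpow_nonneg hspos.le μ) (hnonneg _ hs), e1,
            show t = 2 * (t / 2) by ring, Real.mul_rpow (by norm_num) (by positivity),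
            show (2 * (t/2)) / 2 = t / 2 by ring, hCv]
          have hne : ((t:ℝ) / 2) ^ α ≠ 0 := ne_of_gt (Real.rpow_pos_of_pos hspos α)
          field_simp
  have hCM : Cv * M ^ β ≤ M := by
    have h1 : Cv ≤ M ^ (1 - β) := by
      have h2 : X ≤ M := le_max_left _ _
      have h3 : Cv = X ^ (1 - β) := by
        rw [hX, ← Real.rpow_mul hCvpos.le, one_div, inv_mul_cancel₀ (ne_of_gt h1β),
          Real.rpow_one]
      rw [h3]
      exact Real.rpow_le_rpow hXpos.le h2 h1β.le
    calc Cv * M ^ β ≤ M ^ (1 - β) * M ^ β :=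
          mul_le_mul_of_nonneg_right h1 (Real.rpow_nonneg hMpos.le _)
      _ = M := by rw [← Real.rpow_add hMpos]; norm_num
  -- decay on dyadic bands
  have bands : ∀ n : ℕ, ∀ t, k₀ ≤ t → t ≤ 2 ^ n * (2 * k₀) → t ^ μ * φ t ≤ M := by
    intro n
    induction n with
    | zero =>
      intro t ht1 ht2
      simp only [pow_zero, one_mul] at ht2
      have htpos : (0:ℝ) < t := lt_of_lt_of_le hk₀ ht1
      have hb1 : t ^ μ ≤ (2 * k₀) ^ μ := Real.rpow_le_rpow htpos.le ht2 hμ.le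
      have hb2 : φ t ≤ φ k₀ := hmono (Set.mem_Ici.2 le_rfl) (Set.mem_Ici.2 ht1) ht1
      calc t ^ μ * φ t ≤ (2 * k₀) ^ μ * φ k₀ :=
            mul_le_mul hb1 hb2 (hnonneg t ht1) (Real.rpow_nonneg (by positivity) μ)
        _ ≤ M := le_max_right _ _
    | succ n ih =>
      intro t ht1 ht2
      by_cases hc : t ≤ 2 ^ n * (2 * k₀)
      · exact ih t ht1 hc
      · push_neg at hc
        have h2n : (1:ℝ) ≤ 2 ^ n := one_le_pow₀ (by norm_num)
        have h2k : 2 * k₀ ≤ t := by nlinarith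
        have hs1 : k₀ ≤ t / 2 := by linarith
        have hs2 : t / 2 ≤ 2 ^ n * (2 * k₀) := by
          rw [pow_succ] at ht2; nlinarith
        have hA : (0:ℝ) ≤ (t / 2) ^ μ * φ (t / 2) :=
          mul_nonneg (Real.rpow_nonneg (by linarith) μ) (hnonneg _ hs1)
        calc t ^ μ * φ t ≤ Cv * ((t / 2) ^ μ * φ (t / 2)) ^ β := step t h2k
          _ ≤ Cv * M ^ β := by
              exact mul_le_mul_of_nonneg_left
                (Real.rpow_le_rpow hA (ih _ hs1 hs2) hβ0.le) hCvpos.le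
          _ ≤ M := hCM
  have decay : ∀ t, k₀ ≤ t → t ^ μ * φ t ≤ M := by
    intro t ht
    obtain ⟨n, hn⟩ := exists_nat_gt (t / (2 * k₀))
    have h2 : (n:ℝ) ≤ 2 ^ n := by
      exact_mod_cast (Nat.lt_two_pow_self (n := n)).le
    have hk2 : (0:ℝ) < 2 * k₀ := by linarith
    have : t ≤ 2 ^ n * (2 * k₀) := by
      rw [div_lt_iff₀ hk2] at hn
      nlinarith
    exact bands n t ht this
  -- M ≤ c₅
  set c₅ := (2:ℝ) ^ (α / (1 - β) ^ 2) *
      (c₃ ^ (1 / (1 - β)) + (2 * k₀) ^ μ * φ k₀) with hc₅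
  have hφk₀ : 0 ≤ φ k₀ := hnonneg k₀ le_rfl
  have hD : (1:ℝ) ≤ (2:ℝ) ^ (α / (1 - β) ^ 2) :=
    Real.one_le_rpow (by norm_num) (by positivity)
  have hXeq : X = (2:ℝ) ^ (α / (1 - β) ^ 2) * c₃ ^ (1 / (1 - β)) := by
    rw [hX, hCv, Real.mul_rpow (Real.rpow_nonneg (by norm_num) μ) hc₃.le,
      ← Real.rpow_mul (by norm_num : (0:ℝ) ≤ 2)]
    have hexp : μ * (1 / (1 - β)) = α / (1 - β) ^ 2 := by
      rw [hμdef, div_mul_div_comm, mul_one, sq]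
    rw [hexp]
  have hM5 : M ≤ c₅ := by
    apply max_le
    · rw [hXeq, hc₅]
      have hnn : 0 ≤ (2 * k₀) ^ μ * φ k₀ :=
        mul_nonneg (Real.rpow_nonneg (by positivity) μ) hφk₀
      exact mul_le_mul_of_nonneg_left (le_add_of_nonneg_right hnn)
        (le_trans zero_le_one hD)
    · rw [hc₅]
      have hnn : 0 ≤ (2 * k₀) ^ μ * φ k₀ :=
        mul_nonneg (Real.rpow_nonneg (by positivity) μ) hφk₀
      have hc3nn : (0:ℝ) ≤ c₃ ^ (1 / (1 - β)) := Real.rpow_nonneg hc₃.le _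
      calc (2 * k₀) ^ μ * φ k₀ ≤ c₃ ^ (1 / (1 - β)) + (2 * k₀) ^ μ * φ k₀ :=
            le_add_of_nonneg_left hc3nn
        _ ≤ 2 ^ (α / (1 - β) ^ 2) * (c₃ ^ (1 / (1 - β)) + (2 * k₀) ^ μ * φ k₀) :=
            le_mul_of_one_le_left (by linarith) hD
  have hc₅pos : 0 < c₅ := lt_of_lt_of_le hMpos hM5
  -- main statement
  intro h k hk hkh
  have hkpos : 0 < k := lt_of_lt_of_le hk₀ hk
  have hhk : 0 < h - k := by linarith
  have hhpos : 0 < h := by linarith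
  have hφk : 0 ≤ φ k := hnonneg k hk
  have hφh : φ h ≤ φ k :=
    hmono (Set.mem_Ici.2 hk) (Set.mem_Ici.2 (by linarith)) hkh.le
  by_cases hzero : φ k = 0
  · rw [hzero, Real.zero_rpow hβ0.ne', mul_zero, zero_div]
    have := hnonneg h (by linarith)
    linarith [hφh, hzero ▸ hφh]
  have hφkpos : 0 < φ k := lt_of_le_of_ne hφk (Ne.symm hzero)
  by_cases hcase : 2 * k ≤ h
  · -- case h ≥ 2k
    have hh2 : k ≤ h / 2 := by linarith
    have hh2k₀ : k₀ ≤ h / 2 := hk.trans hh2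
    have hdh : φ h ≤ c₃ * φ (h / 2) ^ β / (h / 2) ^ α := by
      have := hdouble (h / 2) hh2k₀
      rwa [show 2 * (h / 2) = h by ring] at this
    have hmonoh : φ (h / 2) ≤ φ k :=
      hmono (Set.mem_Ici.2 hk) (Set.mem_Ici.2 hh2k₀) hh2
    have hβmono : φ (h / 2) ^ β ≤ φ k ^ β :=
      Real.rpow_le_rpow (hnonneg _ hh2k₀) hmonoh hβ0.le
    have hden : (h - k) ^ α ≤ 2 ^ α * (h / 2) ^ α := by
      rw [← Real.mul_rpow (by norm_num) (by positivity),
        show (2:ℝ) * (h / 2) = h by ring]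
      exact Real.rpow_le_rpow hhk.le (by linarith) hα.le
    have h24 : (2:ℝ) ^ α ≤ 4 ^ α :=
      Real.rpow_le_rpow (by norm_num) (by norm_num) hα.le
    have hd2pos : (0:ℝ) < (h / 2) ^ α := Real.rpow_pos_of_pos (by linarith) α
    have hdkpos : (0:ℝ) < (h - k) ^ α := Real.rpow_pos_of_pos hhk α
    have hkey : c₃ * φ k ^ β / (h / 2) ^ α ≤ 4 ^ α * c₃ * φ k ^ β / (h - k) ^ α := by
      rw [div_le_div_iff₀ hd2pos hdkpos]
      have hy : (0:ℝ) ≤ φ k ^ β := Real.rpow_nonneg hφk β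
      calc c₃ * φ k ^ β * (h - k) ^ α ≤ c₃ * φ k ^ β * (2 ^ α * (h / 2) ^ α) :=
            mul_le_mul_of_nonneg_left hden (mul_nonneg hc₃.le hy)
        _ = 2 ^ α * c₃ * φ k ^ β * (h / 2) ^ α := by ring
        _ ≤ 4 ^ α * c₃ * φ k ^ β * (h / 2) ^ α := by
            have h1 : (2:ℝ) ^ α * c₃ ≤ 4 ^ α * c₃ :=
              mul_le_mul_of_nonneg_right h24 hc₃.le
            exact mul_le_mul_of_nonneg_right
              (mul_le_mul_of_nonneg_right h1 hy) hd2pos.le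
    calc φ h ≤ c₃ * φ (h / 2) ^ β / (h / 2) ^ α := hdh
      _ ≤ c₃ * φ k ^ β / (h / 2) ^ α := by gcongr
      _ ≤ 4 ^ α * c₃ * φ k ^ β / (h - k) ^ α := hkey
      _ ≤ _ := by
          gcongr
          exact le_max_left _ _
  · -- case h < 2k
    push_neg at hcase
    have hdlt : h - k < k := by linarith
    have hkμpos : (0:ℝ) < k ^ μ := Real.rpow_pos_of_pos hkpos μ
    have hd : φ k ≤ M / k ^ μ := by
      rw [le_div_iff₀ hkμpos]
      have := decay k hk
      linarith [this, mul_comm (φ k) (k ^ μ)]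
    have h4 : (M / k ^ μ) ^ (1 - β) = M ^ (1 - β) / k ^ α := by
      rw [Real.div_rpow hMpos.le (Real.rpow_nonneg hkpos.le μ),
        ← Real.rpow_mul hkpos.le, hμ1β]
    have h3 : φ k ^ (1 - β) ≤ M ^ (1 - β) / k ^ α := by
      rw [← h4]
      exact Real.rpow_le_rpow hφk hd h1β.le
    have h5 : M ^ (1 - β) ≤ c₅ ^ (1 - β) :=
      Real.rpow_le_rpow hMpos.le hM5 h1β.le
    have h6 : (h - k) ^ α ≤ k ^ α :=
      Real.rpow_le_rpow hhk.le hdlt.le hα.le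
    have hkapos : (0:ℝ) < k ^ α := Real.rpow_pos_of_pos hkpos α
    have hdkpos : (0:ℝ) < (h - k) ^ α := Real.rpow_pos_of_pos hhk α
    have hy : (0:ℝ) ≤ φ k ^ β := Real.rpow_nonneg hφk β
    calc φ h ≤ φ k := hφh
      _ = φ k ^ β * φ k ^ (1 - β) := by
          rw [← Real.rpow_add hφkpos]; norm_num
      _ ≤ φ k ^ β * (M ^ (1 - β) / k ^ α) := mul_le_mul_of_nonneg_left h3 hy
      _ = M ^ (1 - β) * φ k ^ β / k ^ α := by ring
      _ ≤ c₅ ^ (1 - β) * φ k ^ β / (h - k) ^ α := by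
          rw [div_le_div_iff₀ hkapos hdkpos]
          have hMβ : (0:ℝ) ≤ M ^ (1 - β) := Real.rpow_nonneg hMpos.le _
          calc M ^ (1 - β) * φ k ^ β * (h - k) ^ α
              ≤ M ^ (1 - β) * φ k ^ β * k ^ α :=
                mul_le_mul_of_nonneg_left h6 (mul_nonneg hMβ hy)
            _ ≤ c₅ ^ (1 - β) * φ k ^ β * k ^ α :=
                mul_le_mul_of_nonneg_right
                  (mul_le_mul_of_nonneg_right h5 hy) hkapos.le
      _ ≤ _ := by
          gcongr
          exact le_max_right _ _
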